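/- Let m = 2n+1 be an odd positive integer, f : Q → Q a function, b, c nonzero rationals, and u, v, w rationals with v, w and all displayed denominators nonzero. Define p = (v^(2m)w^2 − f(u)(c − bv^(2m)))/(2v^(2m)w), q = (−v^(2m)w^2 − f(u)(c − bv^(2m)))/(2v^m·w), T = (v^(4m)w^4 − 2f(u)v^(2m)(c + bv^(2m))w^2 + f(u)^2(c − bv^(2m))^2)/(4v^(4m)w^2), and D = f(u)·T^(m−1). Then: (i) T = p^2 − b·f(u); (ii) the point (T, p·T^n) satisfies y^2 = x^m + b·D; (iii) the point (v^2·T, q·T^n) satisfies y^2 = x^m + c·D; (iv) the point (u, 1/T^n) satisfies D·y^2 = f(x). -/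

import Mathlib

theorem stmt4 (n m : ℕ) (hm : m = 2 * n + 1) (f : ℚ → ℚ) (b c u v w : ℚ)
    (hb : b ≠ 0) (hc : c ≠ 0) (hv : v ≠ 0) (hw : w ≠ 0) (hfu : f u ≠ 0)
    (p q T D : ℚ)
    (hp : p = (v ^ (2 * m) * w ^ 2 - f u * (c - b * v ^ (2 * m))) / (2 * v ^ (2 * m) * w))
    (hq : q = (-(v ^ (2 * m)) * w ^ 2 - f u * (c - b * v ^ (2 * m))) / (2 * v ^ m * w))
    (hT : T = (v ^ (4 * m) * w ^ 4 - 2 * f u * v ^ (2 * m) * (c + b * v ^ (2 * m)) * w ^ 2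
      + (f u) ^ 2 * (c - b * v ^ (2 * m)) ^ 2) / (4 * v ^ (4 * m) * w ^ 2))
    (hT0 : T ≠ 0)
    (hD : D = f u * T ^ (m - 1)) :
    T = p ^ 2 - b * f u ∧
    (p * T ^ n) ^ 2 = T ^ m + b * D ∧
    (q * T ^ n) ^ 2 = (v ^ 2 * T) ^ m + c * D ∧
    D * (1 / T ^ n) ^ 2 = f u := by
  have hvm : v ^ m ≠ 0 := pow_ne_zero _ hv
  have hTn : T ^ n ≠ 0 := pow_ne_zero _ hT0
  have h1 : T = p ^ 2 - b * f u := by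
    rw [hp, hT]
    field_simp
    ring
  have h2 : q ^ 2 = v ^ (2 * m) * T + c * f u := by
    rw [hq, hT]
    field_simp
    ring
  have hm1 : m - 1 = 2 * n := by omega
  refine ⟨h1, ?_, ?_, ?_⟩
  · rw [hD, hm1, hm, h1]; ring
  · have e : (q * T ^ n) ^ 2 = q ^ 2 * T ^ (2 * n) := by ring
    rw [e, h2, hD, hm1, hm]; ring
  · rw [hD, hm1]
    field_simp
    rw [pow_mul']
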